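/- arXiv:1104.3731 — 2 statements merged into one kernel-verified Lean document; each statement's English description precedes it below -/
import Mathlib

section
/- Fix integers d ≥ 1 and n ≥ 1. For g > 0 and ρ ∈ ℝ define the weight of Y ∈ W_n as Q_{g,ρ,n}(Y) = (∏_{x∈range(Y)} F_{g,ρ}(n_x(Y))) / (Σ_{Y'∈W_n} ∏_{x∈range(Y')} F_{g,ρ}(n_x(Y'))). Suppose ρ = ρ(g) is chosen so that α(g,ρ(g)) = (ρ(g)−1)/(2√g) → −∞ as g → ∞. Then for every Y ∈ W_n, lim_{g→∞} Q_{g,ρ(g),n}(Y) = (2d)^{−n}; i.e. the limit is the uniform measure on all n-step nearest-neighbour walks (simple random walk). -/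
/-!
Formalization of statements from "The strong interaction limit of
continuous-time weakly self-avoiding walk" by Brydges, Dahlqvist, Slade.

An `n`-step nearest-neighbour walk on `ℤ^d` starting at the origin is encoded
bijectively by its sequence of steps `s : Fin n → Fin d × Bool`, a step being a
coordinate direction together with a sign.
-/

open scoped BigOperators Topology
open Filter

namespace StrongInteraction

/-- The unit step in coordinate direction `e.1`, with sign `e.2`. -/
def stepVec (d : ℕ) (e : Fin d × Bool) : Fin d → ℤ :=
  fun i => if i = e.1 then (if e.2 then 1 else -1) else 0

/-- `walkPos s k` is the position `Y_k` of the walk started at the origin whose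
successive nearest-neighbour steps are given by `s`. -/
def walkPos {d n : ℕ} (s : Fin n → Fin d × Bool) (k : Fin (n + 1)) : Fin d → ℤ :=
  ∑ i ∈ Finset.univ.filter (fun i : Fin n => (i : ℕ) < (k : ℕ)), stepVec d (s i)

/-- `n_x(Y)`: the number of visits to `x` by the walk. -/
def visits {d n : ℕ} (s : Fin n → Fin d × Bool) (x : Fin d → ℤ) : ℕ :=
  (Finset.univ.filter (fun k : Fin (n + 1) => walkPos s k = x)).card

/-- The set of distinct vertices visited by the walk. -/
def walkRange {d n : ℕ} (s : Fin n → Fin d × Bool) : Finset (Fin d → ℤ) :=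
  Finset.image (walkPos s) Finset.univ

/-- A walk is self-avoiding when its positions are pairwise distinct. -/
def SelfAvoiding {d n : ℕ} (s : Fin n → Fin d × Bool) : Prop :=
  Function.Injective (walkPos s)

instance {d n : ℕ} (s : Fin n → Fin d × Bool) : Decidable (SelfAvoiding s) :=
  inferInstanceAs (Decidable (Function.Injective (walkPos s)))

/-- `c_n`: the number of `n`-step self-avoiding walks. -/
def csaw (d n : ℕ) : ℕ :=
  (Finset.univ.filter fun s : Fin n → Fin d × Bool => SelfAvoiding s).card


/-- `F_{g,ρ}(m) = ∫_0^∞ (s^{m-1}/(m-1)!) e^{-s - g s² + ρ s} ds`, the contribution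
of a vertex visited `m` times, obtained from the Gamma(m,1) density of the sum of
`m` independent Exp(1) holding times. -/
noncomputable def F (g ρ : ℝ) (m : ℕ) : ℝ :=
  ∫ t in Set.Ioi (0 : ℝ),
    (t ^ (m - 1) / (Nat.factorial (m - 1))) * Real.exp (-t - g * t ^ 2 + ρ * t)

/-- The quick-step probability weight `Q_{g,ρ,n}(Y)` of a walk. -/
noncomputable def Qweight (d n : ℕ) (g ρ : ℝ) (s : Fin n → Fin d × Bool) : ℝ :=
  (∏ x ∈ walkRange s, F g ρ (visits s x)) /
    ∑ s' : Fin n → Fin d × Bool, ∏ x ∈ walkRange s', F g ρ (visits s' x)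

/-! ### Auxiliary analysis lemmas -/

open MeasureTheory Set in
/-- Auxiliary integral `G0 ε m = ∫_0^∞ u^{m-1}/(m-1)! e^{-u-εu²} du`. -/
noncomputable def G0 (ε : ℝ) (m : ℕ) : ℝ :=
  ∫ u in Set.Ioi (0 : ℝ),
    (u ^ (m - 1) / (Nat.factorial (m - 1))) * Real.exp (-u - ε * u ^ 2)

open MeasureTheory Set in
lemma integrableOn_bound (m : ℕ) :
    IntegrableOn
      (fun u : ℝ => u ^ (m - 1) / (Nat.factorial (m - 1)) * Real.exp (-u))
      (Set.Ioi 0) := by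
  have hs : (0:ℝ) < ((m - 1 : ℕ) : ℝ) + 1 := by positivity
  have h := Real.GammaIntegral_convergent hs
  have heq : (fun u : ℝ => u ^ (m - 1) / (Nat.factorial (m - 1)) * Real.exp (-u))
      = fun u : ℝ => ((Nat.factorial (m - 1) : ℝ))⁻¹ *
          (Real.exp (-u) * u ^ (((m - 1 : ℕ) : ℝ) + 1 - 1)) := by
    funext u
    rw [add_sub_cancel_right, Real.rpow_natCast]
    simp [div_eq_inv_mul]
    ring
  rw [heq]
  exact h.const_mul _

open MeasureTheory Set in
lemma G0_zero (m : ℕ) : G0 0 m = 1 := by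
  unfold G0
  have h1 : ∀ u : ℝ, u ^ (m - 1) / (Nat.factorial (m - 1)) * Real.exp (-u - 0 * u ^ 2)
      = ((Nat.factorial (m - 1) : ℝ))⁻¹ *
          (Real.exp (-u) * u ^ ((((m - 1 : ℕ) : ℝ) + 1) - 1)) := by
    intro u
    rw [add_sub_cancel_right, Real.rpow_natCast]
    simp only [zero_mul, sub_zero]
    ring
  simp_rw [h1]
  rw [MeasureTheory.integral_const_mul, ← Real.Gamma_eq_integral (by positivity)]
  have h2 : Real.Gamma (((m - 1 : ℕ) : ℝ) + 1) = (Nat.factorial (m - 1) : ℝ) :=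
    Real.Gamma_nat_eq_factorial (m - 1)
  rw [h2, inv_mul_cancel₀ (by exact_mod_cast (Nat.factorial_pos (m - 1)).ne')]

open MeasureTheory Set in
lemma tendsto_G0 (m : ℕ) {ε : ℝ → ℝ} (hε : Tendsto ε atTop (𝓝 0))
    (hε0 : ∀ᶠ g in atTop, 0 ≤ ε g) :
    Tendsto (fun g => G0 (ε g) m) atTop (𝓝 1) := by
  rw [← G0_zero m]
  unfold G0
  refine MeasureTheory.tendsto_integral_filter_of_dominated_convergence
    (fun u => u ^ (m - 1) / (Nat.factorial (m - 1)) * Real.exp (-u)) ?_ ?_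
    (integrableOn_bound m) ?_
  · filter_upwards with g
    exact (Continuous.aestronglyMeasurable (by fun_prop)).restrict
  · filter_upwards [hε0] with g hg
    refine (MeasureTheory.ae_restrict_iff' measurableSet_Ioi).2
      (Filter.Eventually.of_forall fun u hu => ?_)
    have hu0 : (0 : ℝ) < u := hu
    rw [Real.norm_eq_abs, abs_of_nonneg (by positivity)]
    gcongr
    nlinarith [mul_nonneg hg (sq_nonneg u)]
  · refine Filter.Eventually.of_forall fun u => ?_
    have h1 : Tendsto (fun g => -u - ε g * u ^ 2) atTop (𝓝 (-u - 0 * u ^ 2)) :=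
      tendsto_const_nhds.sub (hε.mul_const _)
    have h2 := (Real.continuous_exp.tendsto _).comp h1
    exact h2.const_mul _

open MeasureTheory Set in
lemma F_eq (g ρ : ℝ) (k : ℕ) (hc : 0 < 1 - ρ) :
    F g ρ (k + 1) = (1 - ρ)⁻¹ ^ (k + 1) * G0 (g / (1 - ρ) ^ 2) (k + 1) := by
  have hc0 : (1 - ρ) ≠ 0 := hc.ne'
  have key := MeasureTheory.integral_comp_mul_left_Ioi
    (fun u : ℝ => u ^ k / (Nat.factorial k) * Real.exp (-u - (g / (1 - ρ) ^ 2) * u ^ 2))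
    0 hc
  rw [mul_zero] at key
  have h1 : EqOn
      (fun x : ℝ => (fun u : ℝ => u ^ k / (Nat.factorial k) *
          Real.exp (-u - (g / (1 - ρ) ^ 2) * u ^ 2)) ((1 - ρ) * x))
      (fun x : ℝ => (1 - ρ) ^ k *
        (x ^ k / (Nat.factorial k) * Real.exp (-x - g * x ^ 2 + ρ * x)))
      (Set.Ioi 0) := by
    intro x hx
    simp only
    have h2 : -((1 - ρ) * x) - g / (1 - ρ) ^ 2 * ((1 - ρ) * x) ^ 2
        = -x - g * x ^ 2 + ρ * x := by
      field_simp
      ring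
    rw [h2, mul_pow]
    ring
  rw [MeasureTheory.setIntegral_congr_fun measurableSet_Ioi h1,
    MeasureTheory.integral_const_mul] at key
  have hF : F g ρ (k + 1)
      = ∫ x in Set.Ioi (0:ℝ), x ^ k / (Nat.factorial k) *
          Real.exp (-x - g * x ^ 2 + ρ * x) := by
    simp [F]
  have hG : G0 (g / (1 - ρ) ^ 2) (k + 1)
      = ∫ u in Set.Ioi (0:ℝ), u ^ k / (Nat.factorial k) *
          Real.exp (-u - (g / (1 - ρ) ^ 2) * u ^ 2) := by
    simp [G0]
  rw [smul_eq_mul] at key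
  rw [hF, hG]
  set I := ∫ (x : ℝ) in Ioi 0, x ^ k / (Nat.factorial k) *
      Real.exp (-x - g * x ^ 2 + ρ * x) with hI
  set J := ∫ (u : ℝ) in Ioi 0, u ^ k / (Nat.factorial k) *
      Real.exp (-u - (g / (1 - ρ) ^ 2) * u ^ 2) with hJ
  have hpk : ((1 - ρ)) ^ k ≠ 0 := pow_ne_zero _ hc0
  field_simp at key ⊢
  rw [← key, one_div_pow, pow_succ]
  field_simp

/-! ### Combinatorial lemmas -/

lemma sum_visits {d n : ℕ} (s : Fin n → Fin d × Bool) :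
    ∑ x ∈ walkRange s, visits s x = n + 1 := by
  classical
  have h := Finset.card_eq_sum_card_image (walkPos s) Finset.univ
  simpa [walkRange, visits, Finset.card_univ] using h.symm

lemma one_le_visits {d n : ℕ} (s : Fin n → Fin d × Bool) {x : Fin d → ℤ}
    (hx : x ∈ walkRange s) : 1 ≤ visits s x := by
  classical
  obtain ⟨k, -, hk⟩ := Finset.mem_image.1 hx
  have : k ∈ Finset.univ.filter (fun k : Fin (n + 1) => walkPos s k = x) := by
    simp [hk]
  exact Finset.card_pos.2 ⟨k, this⟩

/-- if `α(g,ρ(g)) = (ρ(g)-1)/(2√g) → -∞` as `g → ∞`, the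
quick-step weights converge to the uniform measure on all `(2d)^n` walks. -/
theorem quickstep_limit_a_bot (d n : ℕ) (hd : 1 ≤ d) (hn : 1 ≤ n)
    (ρ : ℝ → ℝ)
    (hα : Tendsto (fun g : ℝ => (ρ g - 1) / (2 * Real.sqrt g)) atTop atBot)
    (s : Fin n → Fin d × Bool) :
    Tendsto (fun g : ℝ => Qweight d n g (ρ g) s) atTop
      (𝓝 (((2 * d : ℝ)) ^ n)⁻¹) := by
  classical
  set A : ℝ → ℝ := fun g => (ρ g - 1) / (2 * Real.sqrt g) with hAdef
  have hg_pos : ∀ᶠ g : ℝ in atTop, (0:ℝ) < g := eventually_gt_atTop 0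
  have hA_neg : ∀ᶠ g in atTop, A g < -1 := hα.eventually (eventually_lt_atBot (-1))
  have hc : ∀ᶠ g in atTop, 0 < 1 - ρ g := by
    filter_upwards [hg_pos, hA_neg] with g hg hAg
    have hs2 : 0 < 2 * Real.sqrt g := by positivity
    have h1 : ρ g - 1 = A g * (2 * Real.sqrt g) := (div_eq_iff hs2.ne').1 rfl
    nlinarith
  set ε : ℝ → ℝ := fun g => g / (1 - ρ g) ^ 2 with hεdef
  have hε0 : ∀ᶠ g in atTop, 0 ≤ ε g := by
    filter_upwards [hg_pos] with g hg
    exact div_nonneg hg.le (sq_nonneg _)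
  have hε : Tendsto ε atTop (𝓝 0) := by
    have h1 : Tendsto (fun g => |A g|) atTop atTop := tendsto_abs_atBot_atTop.comp hα
    have h3 : Tendsto (fun g => |A g| ^ 2) atTop atTop :=
      (tendsto_pow_atTop two_ne_zero).comp h1
    simp only [sq_abs] at h3
    have h2 : Tendsto (fun g => 4 * (A g) ^ 2) atTop atTop :=
      h3.const_mul_atTop (by norm_num)
    have h4 : Tendsto (fun g => (4 * (A g) ^ 2)⁻¹) atTop (𝓝 0) :=
      h2.inv_tendsto_atTop
    refine Tendsto.congr' ?_ h4
    filter_upwards [hg_pos, hA_neg, hc] with g hg hAg hcg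
    have hs2 : 0 < 2 * Real.sqrt g := by positivity
    have h1 : ρ g - 1 = A g * (2 * Real.sqrt g) := (div_eq_iff hs2.ne').1 rfl
    have hsq : Real.sqrt g ^ 2 = g := Real.sq_sqrt hg.le
    have h5 : (1 - ρ g) ^ 2 = 4 * (A g) ^ 2 * g := by nlinarith
    have hA0 : A g ≠ 0 := by nlinarith
    show (4 * (A g) ^ 2)⁻¹ = g / (1 - ρ g) ^ 2
    rw [h5]
    field_simp
  -- rewrite each product of `F`s
  have hwalkprod : ∀ᶠ g in atTop, ∀ s' : Fin n → Fin d × Bool,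
      ∏ x ∈ walkRange s', F g (ρ g) (visits s' x)
        = (1 - ρ g)⁻¹ ^ (n + 1) * ∏ x ∈ walkRange s', G0 (ε g) (visits s' x) := by
    filter_upwards [hc] with g hcg s'
    have h1 : ∀ x ∈ walkRange s', F g (ρ g) (visits s' x)
        = (1 - ρ g)⁻¹ ^ (visits s' x) * G0 (ε g) (visits s' x) := by
      intro x hx
      have hv := one_le_visits s' hx
      have hvx : visits s' x = (visits s' x - 1) + 1 := (Nat.succ_pred_eq_of_pos hv).symm
      rw [hvx]
      exact F_eq g (ρ g) _ hcg
    rw [Finset.prod_congr rfl h1, Finset.prod_mul_distrib,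
      Finset.prod_pow_eq_pow_sum, sum_visits]
  have hQ : ∀ᶠ g in atTop,
      Qweight d n g (ρ g) s
        = (∏ x ∈ walkRange s, G0 (ε g) (visits s x)) /
            ∑ s' : Fin n → Fin d × Bool, ∏ x ∈ walkRange s', G0 (ε g) (visits s' x) := by
    filter_upwards [hc, hwalkprod] with g hcg hwp
    have hC : (1 - ρ g)⁻¹ ^ (n + 1) ≠ 0 := pow_ne_zero _ (inv_ne_zero hcg.ne')
    rw [Qweight, hwp s, Finset.sum_congr rfl fun s' _ => hwp s',
      ← Finset.mul_sum, mul_div_mul_left _ _ hC]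
  -- limits of numerator and denominator
  have hprod : ∀ s' : Fin n → Fin d × Bool,
      Tendsto (fun g => ∏ x ∈ walkRange s', G0 (ε g) (visits s' x)) atTop (𝓝 1) := by
    intro s'
    have h := tendsto_finset_prod (f := fun (x : Fin d → ℤ) g => G0 (ε g) (visits s' x))
      (a := fun _ => (1:ℝ)) (walkRange s')
      (fun x _ => tendsto_G0 (visits s' x) hε hε0)
    simpa using h
  have hcard : ((Finset.univ : Finset (Fin n → Fin d × Bool)).card : ℝ) = (2 * d : ℝ) ^ n := by
    rw [Finset.card_univ, Fintype.card_fun]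
    push_cast
    simp [Fintype.card_prod]
    ring
  have hden : Tendsto (fun g => ∑ s' : Fin n → Fin d × Bool,
      ∏ x ∈ walkRange s', G0 (ε g) (visits s' x)) atTop (𝓝 ((2 * d : ℝ) ^ n)) := by
    have h := tendsto_finset_sum (Finset.univ : Finset (Fin n → Fin d × Bool))
      (fun s' _ => hprod s')
    have h' : (∑ _s' : Fin n → Fin d × Bool, (1:ℝ)) = (2 * d : ℝ) ^ n := by
      rw [Finset.sum_const, nsmul_eq_mul, mul_one, hcard]
    rw [h'] at h
    exact h
  have hpos : (0:ℝ) < (2 * d : ℝ) ^ n := by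
    have : (0:ℝ) < 2 * d := by
      have : (1:ℝ) ≤ d := by exact_mod_cast hd
      linarith
    positivity
  have hlim := (hprod s).div hden hpos.ne'
  rw [one_div] at hlim
  exact Tendsto.congr' (hQ.mono fun g hg => hg.symm) hlim

end StrongInteraction
end

section
/- For every ε > 0 there exists A_0 > 0 such that for all real α ≥ A ≥ A_0 and all integers m ≥ 1, J_m(α) ≤ (1+ε) J_m(A). -/
/-!
Formalization of statements from "The strong interaction limit of
continuous-time weakly self-avoiding walk" by Brydges, Dahlqvist, Slade.

An `n`-step nearest-neighbour walk on `ℤ^d` starting at the origin is encoded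
bijectively by its sequence of steps `s : Fin n → Fin d × Bool`, a step being a
coordinate direction together with a sign.
-/

open scoped BigOperators Topology
open Filter

namespace StrongInteraction

/-- `J_m(α) = ∫_{-α}^∞ ((1+u/α)^{m-1}/(m-1)!) e^{-u²} du`. -/
noncomputable def Jfun (α : ℝ) (m : ℕ) : ℝ :=
  ∫ u in Set.Ioi (-α), ((1 + u / α) ^ (m - 1) / (Nat.factorial (m - 1))) * Real.exp (-u ^ 2)

open MeasureTheory Set Real

noncomputable def Ifun (α : ℝ) (k : ℕ) : ℝ :=
  ∫ u in Set.Ioi (-α), (1 + u / α) ^ k * Real.exp (-u ^ 2)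

lemma integrable_pow_gauss (n : ℕ) :
    Integrable (fun x : ℝ => x ^ n * Real.exp (-x ^ 2)) := by
  have hmaj : Integrable (fun x : ℝ =>
      ((n.factorial : ℝ) * Real.exp 1) * Real.exp (-(1/2 : ℝ) * x ^ 2)) :=
    (integrable_exp_neg_mul_sq (by norm_num)).const_mul _
  refine hmaj.mono' ?_ ?_
  · exact ((continuous_pow n).mul
      (Real.continuous_exp.comp (continuous_pow 2).neg)).aestronglyMeasurable
  · filter_upwards with x
    have hfac : (0 : ℝ) < (n.factorial : ℝ) := by positivity
    have h1 : |x| ^ n ≤ (n.factorial : ℝ) * Real.exp |x| := by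
      have hs := Real.sum_le_exp_of_nonneg (abs_nonneg x) (n + 1)
      have h2 : |x| ^ n / (n.factorial : ℝ) ≤ ∑ i ∈ Finset.range (n + 1), |x| ^ i / (i.factorial : ℝ) :=
        Finset.single_le_sum (f := fun i => |x| ^ i / (i.factorial : ℝ))
          (fun i _ => by positivity) (Finset.self_mem_range_succ n)
      have h3 : |x| ^ n / (n.factorial : ℝ) ≤ Real.exp |x| := h2.trans hs
      calc |x| ^ n = |x| ^ n / (n.factorial : ℝ) * (n.factorial : ℝ) := by field_simp
        _ ≤ Real.exp |x| * (n.factorial : ℝ) := by gcongr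
        _ = (n.factorial : ℝ) * Real.exp |x| := mul_comm _ _
    have h4 : Real.exp |x| ≤ Real.exp 1 * Real.exp ((1/2 : ℝ) * x ^ 2) := by
      rw [← Real.exp_add]
      apply Real.exp_le_exp.2
      nlinarith [sq_nonneg (|x| - 1), sq_abs x]
    have h6 : |x| ^ n ≤ (n.factorial : ℝ) * (Real.exp 1 * Real.exp ((1/2 : ℝ) * x ^ 2)) :=
      h1.trans (by exact mul_le_mul_of_nonneg_left h4 hfac.le)
    have h5 : ‖x ^ n * Real.exp (-x ^ 2)‖ = |x| ^ n * Real.exp (-x ^ 2) := by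
      rw [norm_mul, norm_pow, Real.norm_eq_abs, Real.norm_eq_abs,
        abs_of_pos (Real.exp_pos _)]
    rw [h5]
    have hexp : Real.exp ((1/2 : ℝ) * x ^ 2) * Real.exp (-x ^ 2)
        = Real.exp (-(1/2 : ℝ) * x ^ 2) := by
      rw [← Real.exp_add]; ring_nf
    calc |x| ^ n * Real.exp (-x ^ 2)
        ≤ ((n.factorial : ℝ) * (Real.exp 1 * Real.exp ((1/2 : ℝ) * x ^ 2))) * Real.exp (-x ^ 2) :=
          mul_le_mul_of_nonneg_right h6 (Real.exp_pos _).le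
      _ = ((n.factorial : ℝ) * Real.exp 1) * (Real.exp ((1/2 : ℝ) * x ^ 2) * Real.exp (-x ^ 2)) := by
          ring
      _ = ((n.factorial : ℝ) * Real.exp 1) * Real.exp (-(1/2 : ℝ) * x ^ 2) := by rw [hexp]

lemma f_eq_sum (α : ℝ) (k : ℕ) :
    (fun u : ℝ => (1 + u / α) ^ k * Real.exp (-u ^ 2))
      = fun u => ∑ j ∈ Finset.range (k + 1),
          ((k.choose j : ℝ) * (1 / α) ^ j) * (u ^ j * Real.exp (-u ^ 2)) := by
  funext u
  rw [show (1 : ℝ) + u / α = u / α + 1 by ring, add_pow, Finset.sum_mul]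
  refine Finset.sum_congr rfl fun j _ => ?_
  rw [div_pow, one_pow, div_pow, one_pow]
  ring

lemma integrable_f (α : ℝ) (k : ℕ) :
    Integrable (fun u : ℝ => (1 + u / α) ^ k * Real.exp (-u ^ 2)) := by
  rw [f_eq_sum]
  exact integrable_finset_sum _ fun j _ => (integrable_pow_gauss j).const_mul _

lemma tendsto_pow_gauss (n : ℕ) :
    Tendsto (fun u : ℝ => u ^ n * Real.exp (-u ^ 2)) atTop (𝓝 0) := by
  refine squeeze_zero' ?_ ?_ (Real.tendsto_pow_mul_exp_neg_atTop_nhds_zero n)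
  · filter_upwards [eventually_ge_atTop (1 : ℝ)] with u hu
    positivity
  · filter_upwards [eventually_ge_atTop (1 : ℝ)] with u hu
    have : Real.exp (-u ^ 2) ≤ Real.exp (-u) := by
      apply Real.exp_le_exp.2; nlinarith
    have hun : (0 : ℝ) ≤ u ^ n := by positivity
    exact mul_le_mul_of_nonneg_left this hun

lemma tendsto_f (α : ℝ) (k : ℕ) :
    Tendsto (fun u : ℝ => (1 + u / α) ^ k * Real.exp (-u ^ 2)) atTop (𝓝 0) := by
  rw [f_eq_sum]
  have h := tendsto_finset_sum (Finset.range (k + 1))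
    (fun j _ => ((tendsto_pow_gauss j).const_mul (((k.choose j : ℝ) * (1 / α) ^ j))))
  simpa using h

lemma Ifun_nonneg (α : ℝ) (hα : 0 < α) (k : ℕ) : 0 ≤ Ifun α k := by
  refine setIntegral_nonneg measurableSet_Ioi fun u hu => ?_
  have h1 : (0 : ℝ) ≤ 1 + u / α := by
    have h2 : (0 : ℝ) ≤ (α + u) / α := div_nonneg (by linarith [le_of_lt (Set.mem_Ioi.mp hu)]) hα.le
    have h3 : (α + u) / α = 1 + u / α := by field_simp
    linarith [h3 ▸ h2]
  positivity

lemma alg_id (α u E : ℝ) (hα : α ≠ 0) (k : ℕ) :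
    (↑(k + 1) : ℝ) * (1 + u / α) ^ k * (1 / α) * Real.exp (-u ^ 2)
        + (1 + u / α) ^ (k + 1) * (Real.exp (-u ^ 2) * -(2 * u))
      = ((k : ℝ) + 1) / α * ((1 + u / α) ^ k * Real.exp (-u ^ 2))
        + (2 * α * ((1 + u / α) ^ (k + 1) * Real.exp (-u ^ 2))
          - 2 * α * ((1 + u / α) ^ (k + 2) * Real.exp (-u ^ 2))) := by
  have h : u = α * (1 + u / α) - α := by field_simp; ring
  push_cast
  generalize hx : (1 : ℝ) + u / α = x at h ⊢
  generalize hE : Real.exp (-u ^ 2) = E at h ⊢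
  rw [h]
  ring

lemma Ifun_rec (α : ℝ) (hα : 0 < α) (k : ℕ) :
    Ifun α (k + 2) = Ifun α (k + 1) + ((k + 1 : ℝ) / (2 * α ^ 2)) * Ifun α k := by
  have hα' : α ≠ 0 := hα.ne'
  set G : ℝ → ℝ := fun u => (1 + u / α) ^ (k + 1) * Real.exp (-u ^ 2) with hG
  have hderiv : ∀ u : ℝ, HasDerivAt G
      (((k : ℝ) + 1) / α * ((1 + u / α) ^ k * Real.exp (-u ^ 2))
        + (2 * α * ((1 + u / α) ^ (k + 1) * Real.exp (-u ^ 2))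
          - 2 * α * ((1 + u / α) ^ (k + 2) * Real.exp (-u ^ 2)))) u := by
    intro u
    have h1 : HasDerivAt (fun u : ℝ => 1 + u / α) (1 / α) u := by
      simpa using ((hasDerivAt_id u).div_const α).const_add 1
    have h2 := h1.pow (k + 1)
    simp only [Nat.add_sub_cancel] at h2
    have h3 : HasDerivAt (fun u : ℝ => Real.exp (-u ^ 2)) (Real.exp (-u ^ 2) * -(2 * u)) u := by
      have hneg : HasDerivAt (fun u : ℝ => -u ^ 2) (-(2 * u)) u := by
        simpa using (hasDerivAt_pow 2 u).fun_neg
      exact (Real.hasDerivAt_exp _).comp u hneg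
    have h4 := h2.mul h3
    rw [← alg_id α u (Real.exp (-u ^ 2)) hα' k]
    exact h4
  have hcont : ContinuousWithinAt G (Ici (-α)) (-α) :=
    (((continuous_const.add (continuous_id.div_const α)).pow _).mul
      (Real.continuous_exp.comp (continuous_pow 2).neg)).continuousWithinAt
  have ha : Integrable (fun u : ℝ =>
      ((k : ℝ) + 1) / α * ((1 + u / α) ^ k * Real.exp (-u ^ 2))) volume :=
    (integrable_f α k).const_mul _
  have hb : Integrable (fun u : ℝ =>
      2 * α * ((1 + u / α) ^ (k + 1) * Real.exp (-u ^ 2))) volume :=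
    (integrable_f α (k + 1)).const_mul _
  have hc : Integrable (fun u : ℝ =>
      2 * α * ((1 + u / α) ^ (k + 2) * Real.exp (-u ^ 2))) volume :=
    (integrable_f α (k + 2)).const_mul _
  have hbc : Integrable (fun u : ℝ =>
      2 * α * ((1 + u / α) ^ (k + 1) * Real.exp (-u ^ 2))
        - 2 * α * ((1 + u / α) ^ (k + 2) * Real.exp (-u ^ 2))) volume := hb.sub hc
  have habc : Integrable (fun u : ℝ =>
      ((k : ℝ) + 1) / α * ((1 + u / α) ^ k * Real.exp (-u ^ 2))
        + (2 * α * ((1 + u / α) ^ (k + 1) * Real.exp (-u ^ 2))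
          - 2 * α * ((1 + u / α) ^ (k + 2) * Real.exp (-u ^ 2)))) volume := ha.add hbc
  have htend : Tendsto G atTop (𝓝 0) := tendsto_f α (k + 1)
  have key := integral_Ioi_of_hasDerivAt_of_tendsto hcont (fun x _ => hderiv x)
    habc.integrableOn htend
  have hG0 : G (-α) = 0 := by
    have h0 : 1 + (-α) / α = 0 := by field_simp; norm_num
    simp [hG, h0]
  rw [hG0, sub_zero] at key
  rw [integral_add ha.integrableOn hbc.integrableOn,
    integral_sub hb.integrableOn hc.integrableOn,
    integral_const_mul, integral_const_mul, integral_const_mul] at key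
  have key2 : ((k : ℝ) + 1) / α * Ifun α k
      + (2 * α * Ifun α (k + 1) - 2 * α * Ifun α (k + 2)) = 0 := key
  have h2α : (2 * α ^ 2 : ℝ) ≠ 0 := by positivity
  field_simp at key2 ⊢
  nlinarith [key2]

lemma integrable_gauss : Integrable (fun u : ℝ => Real.exp (-u ^ 2)) := by
  have := integrable_exp_neg_mul_sq (b := 1) one_pos
  simpa using this

lemma integrable_id_gauss : Integrable (fun u : ℝ => u * Real.exp (-u ^ 2)) := by
  have := integrable_pow_gauss 1
  simpa using this

lemma tendsto_gauss : Tendsto (fun u : ℝ => Real.exp (-u ^ 2)) atTop (𝓝 0) := by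
  have := tendsto_f 1 0
  simpa using this

lemma integral_id_gauss (a : ℝ) :
    ∫ u in Ioi a, u * Real.exp (-u ^ 2) = Real.exp (-a ^ 2) / 2 := by
  have hderiv : ∀ u : ℝ, HasDerivAt (fun u : ℝ => -Real.exp (-u ^ 2) / 2)
      (u * Real.exp (-u ^ 2)) u := by
    intro u
    have hneg : HasDerivAt (fun u : ℝ => -u ^ 2) (-(2 * u)) u := by
      simpa using (hasDerivAt_pow 2 u).fun_neg
    have h3 : HasDerivAt (fun u : ℝ => Real.exp (-u ^ 2)) (Real.exp (-u ^ 2) * -(2 * u)) u :=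
      (Real.hasDerivAt_exp _).comp u hneg
    have := (h3.neg).div_const 2
    convert this using 1
    all_goals first | rfl | ring
  have hcont : ContinuousWithinAt (fun u : ℝ => -Real.exp (-u ^ 2) / 2) (Ici a) a :=
    (((Real.continuous_exp.comp (continuous_pow 2).neg)).neg.div_const 2).continuousWithinAt
  have htend : Tendsto (fun u : ℝ => -Real.exp (-u ^ 2) / 2) atTop (𝓝 0) := by
    have := (tendsto_gauss.neg).div_const 2
    simpa using this
  have key := integral_Ioi_of_hasDerivAt_of_tendsto hcont (fun x _ => hderiv x)
    integrable_id_gauss.integrableOn htend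
  rw [key]
  ring

lemma Ifun_one (α : ℝ) (hα : 0 < α) : Ifun α 1 = Ifun α 0 + Real.exp (-α ^ 2) / (2 * α) := by
  have hα' : α ≠ 0 := hα.ne'
  have heq : ∀ u : ℝ, (1 + u / α) ^ 1 * Real.exp (-u ^ 2)
      = (1 + u / α) ^ 0 * Real.exp (-u ^ 2) + (1 / α) * (u * Real.exp (-u ^ 2)) := by
    intro u; ring
  have h1 : Ifun α 1 = Ifun α 0 + (1 / α) * ∫ u in Ioi (-α), u * Real.exp (-u ^ 2) := by
    unfold Ifun
    rw [← integral_const_mul]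
    rw [← integral_add ((integrable_f α 0).integrableOn)
      ((integrable_id_gauss.const_mul _).integrableOn)]
    exact setIntegral_congr_fun measurableSet_Ioi fun u _ => heq u
  rw [h1, integral_id_gauss]
  have : (-α) ^ 2 = α ^ 2 := by ring
  rw [this]
  field_simp

lemma Ifun_zero_le (α : ℝ) : Ifun α 0 ≤ Real.sqrt π := by
  have h1 : Ifun α 0 = ∫ u in Ioi (-α), Real.exp (-1 * u ^ 2) := by
    unfold Ifun
    refine setIntegral_congr_fun measurableSet_Ioi fun u _ => ?_
    norm_num
  rw [h1]
  calc ∫ u in Ioi (-α), Real.exp (-1 * u ^ 2)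
      ≤ ∫ u : ℝ, Real.exp (-1 * u ^ 2) :=
        setIntegral_le_integral (integrable_exp_neg_mul_sq one_pos)
          (Filter.Eventually.of_forall fun u => (Real.exp_pos _).le)
    _ = Real.sqrt (π / 1) := integral_gaussian 1
    _ = Real.sqrt π := by norm_num

lemma Ifun_zero_ge (A : ℝ) (hA : 1 ≤ A) : Real.sqrt π - 1 / (2 * A) ≤ Ifun A 0 := by
  have hA0 : 0 < A := lt_of_lt_of_le one_pos hA
  have hsplit : (∫ u in Iic (-A), Real.exp (-u ^ 2)) + (∫ u in Ioi (-A), Real.exp (-u ^ 2))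
      = Real.sqrt π := by
    rw [intervalIntegral.integral_Iic_add_Ioi integrable_gauss.integrableOn integrable_gauss.integrableOn]
    have : ∀ u : ℝ, Real.exp (-u ^ 2) = Real.exp (-1 * u ^ 2) := by intro u; norm_num
    rw [show (fun u : ℝ => Real.exp (-u ^ 2)) = fun u : ℝ => Real.exp (-1 * u ^ 2) from
      funext this, integral_gaussian 1]
    norm_num
  have h0 : Ifun A 0 = ∫ u in Ioi (-A), Real.exp (-u ^ 2) := by
    unfold Ifun
    exact setIntegral_congr_fun measurableSet_Ioi fun u _ => by norm_num
  -- bound the left tail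
  have htail : ∫ u in Iic (-A), Real.exp (-u ^ 2) ≤ 1 / (2 * A) := by
    have hstep : ∫ u in Iic (-A), Real.exp (-u ^ 2)
        ≤ ∫ u in Iic (-A), (1 / A) * (-u * Real.exp (-u ^ 2)) := by
      have hIA : Integrable (fun u : ℝ => (1 / A) * (-u * Real.exp (-u ^ 2))) := by
        have h := (integrable_pow_gauss 1).const_mul (-(1 / A))
        refine h.congr (Filter.EventuallyEq.of_eq (funext fun u => by ring))
      refine setIntegral_mono_on integrable_gauss.integrableOn
        hIA.integrableOn measurableSet_Iic ?_
      intro u hu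
      have hu' : u ≤ -A := hu
      have h1 : 1 ≤ -u / A := by
        rw [le_div_iff₀ hA0]; linarith
      have := mul_le_mul_of_nonneg_right h1 (Real.exp_pos (-u ^ 2)).le
      calc Real.exp (-u ^ 2) = 1 * Real.exp (-u ^ 2) := by ring
        _ ≤ (-u / A) * Real.exp (-u ^ 2) := this
        _ = (1 / A) * (-u * Real.exp (-u ^ 2)) := by ring
    have hval : ∫ u in Iic (-A), -u * Real.exp (-u ^ 2) = Real.exp (-A ^ 2) / 2 := by
      have hderiv : ∀ u : ℝ, HasDerivAt (fun u : ℝ => Real.exp (-u ^ 2) / 2)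
          (-u * Real.exp (-u ^ 2)) u := by
        intro u
        have hneg : HasDerivAt (fun u : ℝ => -u ^ 2) (-(2 * u)) u := by
          simpa using (hasDerivAt_pow 2 u).fun_neg
        have h3 : HasDerivAt (fun u : ℝ => Real.exp (-u ^ 2)) (Real.exp (-u ^ 2) * -(2 * u)) u :=
          (Real.hasDerivAt_exp _).comp u hneg
        have := h3.div_const 2
        convert this using 1
        all_goals first | rfl | ring
      have hcont : ContinuousWithinAt (fun u : ℝ => Real.exp (-u ^ 2) / 2) (Iic (-A)) (-A) :=
        ((Real.continuous_exp.comp (continuous_pow 2).neg).div_const 2).continuousWithinAt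
      have htendB : Tendsto (fun u : ℝ => Real.exp (-u ^ 2) / 2) atBot (𝓝 0) := by
        have hcomp : Tendsto (fun u : ℝ => Real.exp (-u ^ 2)) atBot (𝓝 0) := by
          refine squeeze_zero' (Filter.Eventually.of_forall fun u => (Real.exp_pos _).le) ?_
            Real.tendsto_exp_atBot
          filter_upwards [eventually_le_atBot (-1 : ℝ)] with u hu
          exact Real.exp_le_exp.2 (by nlinarith)
        have := hcomp.div_const 2
        simpa using this
      have hint : IntegrableOn (fun u : ℝ => -u * Real.exp (-u ^ 2)) (Iic (-A)) := by
        have h := (integrable_pow_gauss 1).const_mul (-1)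
        exact (h.congr (Filter.EventuallyEq.of_eq (funext fun u => by ring))).integrableOn
      have key := integral_Iic_of_hasDerivAt_of_tendsto hcont (fun x _ => (hderiv x))
        hint htendB
      rw [key]
      have : (-A) ^ 2 = A ^ 2 := by ring
      rw [this]
      ring
    calc ∫ u in Iic (-A), Real.exp (-u ^ 2)
        ≤ ∫ u in Iic (-A), (1 / A) * (-u * Real.exp (-u ^ 2)) := hstep
      _ = (1 / A) * (Real.exp (-A ^ 2) / 2) := by rw [integral_const_mul, hval]
      _ ≤ (1 / A) * (1 / 2) := by
          have h1 : Real.exp (-A ^ 2) ≤ 1 := by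
            rw [show (1 : ℝ) = Real.exp 0 from Real.exp_zero.symm]
            exact Real.exp_le_exp.2 (by nlinarith)
          have h2 : Real.exp (-A ^ 2) / 2 ≤ 1 / 2 := by linarith
          exact mul_le_mul_of_nonneg_left h2 (by positivity)
      _ = 1 / (2 * A) := by ring
  have htail' : Real.sqrt π - 1 / (2 * A) ≤ Real.sqrt π - ∫ u in Iic (-A), Real.exp (-u ^ 2) := by
    linarith
  rw [h0]
  linarith

lemma Jfun_eq_Ifun (α : ℝ) (m : ℕ) :
    Jfun α m = ((Nat.factorial (m - 1) : ℝ))⁻¹ * Ifun α (m - 1) := by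
  unfold Jfun Ifun
  rw [← integral_const_mul]
  refine setIntegral_congr_fun measurableSet_Ioi fun u _ => ?_
  ring

lemma sqrt_pi_ge_one : (1 : ℝ) ≤ Real.sqrt π := by
  rw [show (1 : ℝ) = Real.sqrt 1 from (Real.sqrt_one).symm]
  exact Real.sqrt_le_sqrt (by linarith [Real.pi_gt_three])


/-- for every `ε > 0` there is `A₀ > 0` such that
`J_m(α) ≤ (1+ε) J_m(A)` for all `α ≥ A ≥ A₀` and all `m ≥ 1`. -/
theorem J_almost_antitone (ε : ℝ) (hε : 0 < ε) :
    ∃ A₀ : ℝ, 0 < A₀ ∧ ∀ A α : ℝ, A₀ ≤ A → A ≤ α → ∀ m : ℕ, 1 ≤ m →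
      Jfun α m ≤ (1 + ε) * Jfun A m := by
  refine ⟨max 1 ((2 + ε) / ε), lt_of_lt_of_le one_pos (le_max_left _ _), ?_⟩
  set A₀ : ℝ := max 1 ((2 + ε) / ε) with hA₀
  have key : ∀ k : ℕ, (∀ A α : ℝ, A₀ ≤ A → A ≤ α → Ifun α k ≤ (1 + ε) * Ifun A k)
      ∧ (∀ A α : ℝ, A₀ ≤ A → A ≤ α → Ifun α (k + 1) ≤ (1 + ε) * Ifun A (k + 1)) := by
    have hbasefacts : ∀ A α : ℝ, A₀ ≤ A → A ≤ α →
        (1 : ℝ) ≤ A ∧ (2 + ε) / ε ≤ A ∧ 0 < A ∧ 0 < α ∧ (1 : ℝ) ≤ α := by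
      intro A α hA hAα
      have h1 : (1 : ℝ) ≤ A := le_trans (le_max_left _ _) hA
      have h2 : (2 + ε) / ε ≤ A := le_trans (le_max_right _ _) hA
      exact ⟨h1, h2, lt_of_lt_of_le one_pos h1, lt_of_lt_of_le one_pos (h1.trans hAα),
        h1.trans hAα⟩
    have hgap : ∀ A : ℝ, A₀ ≤ A → (2 + ε) / (2 * A) ≤ ε / 2 := by
      intro A hA
      have h1 : (1 : ℝ) ≤ A := le_trans (le_max_left _ _) hA
      have h2 : (2 + ε) / ε ≤ A := le_trans (le_max_right _ _) hA
      have hA0 : (0 : ℝ) < A := lt_of_lt_of_le one_pos h1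
      rw [div_le_div_iff₀ (by positivity) (by norm_num)]
      have h3 : 2 + ε ≤ ε * A := by
        rw [div_le_iff₀ hε] at h2
        linarith
      linarith
    have base0 : ∀ A α : ℝ, A₀ ≤ A → A ≤ α → Ifun α 0 ≤ (1 + ε) * Ifun A 0 := by
      intro A α hA hAα
      obtain ⟨h1A, h2A, hA0, hα0, h1α⟩ := hbasefacts A α hA hAα
      have hle : Ifun α 0 ≤ Real.sqrt π := Ifun_zero_le α
      have hge : Real.sqrt π - 1 / (2 * A) ≤ Ifun A 0 := Ifun_zero_ge A h1A
      have hgap' := hgap A hA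
      have hmid : Real.sqrt π ≤ (1 + ε) * (Real.sqrt π - 1 / (2 * A)) := by
        have h1 : (1 + ε) / (2 * A) ≤ (2 + ε) / (2 * A) := by gcongr <;> linarith
        have h2 : (1 + ε) / (2 * A) ≤ ε / 2 := h1.trans hgap'
        have hπ := sqrt_pi_ge_one
        have h3 : ε * 1 ≤ ε * Real.sqrt π := mul_le_mul_of_nonneg_left hπ hε.le
        have h4 : (1 + ε) * (Real.sqrt π - 1 / (2 * A))
            = Real.sqrt π + ε * Real.sqrt π - (1 + ε) / (2 * A) := by ring
        rw [h4]
        linarith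
      calc Ifun α 0 ≤ Real.sqrt π := hle
        _ ≤ (1 + ε) * (Real.sqrt π - 1 / (2 * A)) := hmid
        _ ≤ (1 + ε) * Ifun A 0 := by
            apply mul_le_mul_of_nonneg_left hge (by linarith)
    have base1 : ∀ A α : ℝ, A₀ ≤ A → A ≤ α → Ifun α 1 ≤ (1 + ε) * Ifun A 1 := by
      intro A α hA hAα
      obtain ⟨h1A, h2A, hA0, hα0, h1α⟩ := hbasefacts A α hA hAα
      have hgap' := hgap A hA
      have hup : Ifun α 1 ≤ Real.sqrt π + 1 / (2 * α) := by
        rw [Ifun_one α hα0]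
        have h1 : Real.exp (-α ^ 2) ≤ 1 := by
          rw [show (1 : ℝ) = Real.exp 0 from Real.exp_zero.symm]
          exact Real.exp_le_exp.2 (by nlinarith)
        have h2 : Real.exp (-α ^ 2) / (2 * α) ≤ 1 / (2 * α) := by gcongr
        linarith [Ifun_zero_le α]
      have hdown : Real.sqrt π - 1 / (2 * A) ≤ Ifun A 1 := by
        rw [Ifun_one A hA0]
        have h3 : (0 : ℝ) ≤ Real.exp (-A ^ 2) / (2 * A) := by positivity
        linarith [Ifun_zero_ge A h1A]
      have hmono : 1 / (2 * α) ≤ 1 / (2 * A) := by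
        apply one_div_le_one_div_of_le (by positivity) (by linarith)
      have hmid : Real.sqrt π + 1 / (2 * A) ≤ (1 + ε) * (Real.sqrt π - 1 / (2 * A)) := by
        have hπ := sqrt_pi_ge_one
        have h3 : ε * 1 ≤ ε * Real.sqrt π := mul_le_mul_of_nonneg_left hπ hε.le
        have h4 : (1 + ε) * (Real.sqrt π - 1 / (2 * A))
            = Real.sqrt π + ε * Real.sqrt π - (1 + ε) / (2 * A) := by ring
        have h5 : (1 + ε) / (2 * A) + 1 / (2 * A) = (2 + ε) / (2 * A) := by ring
        rw [h4]
        linarith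
      calc Ifun α 1 ≤ Real.sqrt π + 1 / (2 * α) := hup
        _ ≤ Real.sqrt π + 1 / (2 * A) := by linarith
        _ ≤ (1 + ε) * (Real.sqrt π - 1 / (2 * A)) := hmid
        _ ≤ (1 + ε) * Ifun A 1 := mul_le_mul_of_nonneg_left hdown (by linarith)
    intro k
    induction k with
    | zero => exact ⟨base0, base1⟩
    | succ n ih =>
      refine ⟨ih.2, ?_⟩
      intro A α hA hAα
      obtain ⟨h1A, h2A, hA0, hα0, h1α⟩ := hbasefacts A α hA hAα
      rw [Ifun_rec α hα0 n, Ifun_rec A hA0 n]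
      have h1 := ih.2 A α hA hAα
      have h2 := ih.1 A α hA hAα
      have hc : ((n + 1 : ℝ) / (2 * α ^ 2)) ≤ ((n + 1 : ℝ) / (2 * A ^ 2)) := by
        apply div_le_div_of_nonneg_left (by positivity) (by positivity) (by nlinarith)
      have hIA : 0 ≤ Ifun A n := Ifun_nonneg A hA0 n
      have hIα : 0 ≤ Ifun α n := Ifun_nonneg α hα0 n
      have h3 : ((n + 1 : ℝ) / (2 * α ^ 2)) * Ifun α n
          ≤ ((n + 1 : ℝ) / (2 * A ^ 2)) * ((1 + ε) * Ifun A n) := by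
        calc ((n + 1 : ℝ) / (2 * α ^ 2)) * Ifun α n
            ≤ ((n + 1 : ℝ) / (2 * α ^ 2)) * ((1 + ε) * Ifun A n) :=
              mul_le_mul_of_nonneg_left h2 (by positivity)
          _ ≤ ((n + 1 : ℝ) / (2 * A ^ 2)) * ((1 + ε) * Ifun A n) :=
              mul_le_mul_of_nonneg_right hc (by positivity)
      calc Ifun α (n + 1) + ((n + 1 : ℝ) / (2 * α ^ 2)) * Ifun α n
          ≤ (1 + ε) * Ifun A (n + 1) + ((n + 1 : ℝ) / (2 * A ^ 2)) * ((1 + ε) * Ifun A n) := by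
            linarith
        _ = (1 + ε) * (Ifun A (n + 1) + ((n + 1 : ℝ) / (2 * A ^ 2)) * Ifun A n) := by ring
  intro A α hA hAα m hm
  rw [Jfun_eq_Ifun, Jfun_eq_Ifun]
  have hfac : (0 : ℝ) < ((Nat.factorial (m - 1) : ℝ)) := by positivity
  have hkey := (key (m - 1)).1 A α hA hAα
  calc ((Nat.factorial (m - 1) : ℝ))⁻¹ * Ifun α (m - 1)
      ≤ ((Nat.factorial (m - 1) : ℝ))⁻¹ * ((1 + ε) * Ifun A (m - 1)) :=
        mul_le_mul_of_nonneg_left hkey (by positivity)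
    _ = (1 + ε) * (((Nat.factorial (m - 1) : ℝ))⁻¹ * Ifun A (m - 1)) := by ring

end StrongInteraction
end
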